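/- Let W ⊆ C[z] ⊗ V be a finite-dimensional subspace invariant under ∂_z that contains a 'mixed' vector of the form z^{m+1}·v₁ + Σ_{j} d_j z^{n+j}·v₂ (with d₁ ≠ 0) but contains z^i v₁ only for i ≤ m and z^j v₂ only for j ≤ n. Then applying ∂_z and subtracting known elements forces the coefficients of any mixed vector z^{m+k} v₁ + Σ_{j=1}^{k} c^k_j z^{n+j} v₂ in W to satisfy the recursion c^k_j = ((m+k)!(n+1)!)/((n+j)!(m+k−j+1)!)·c^{k−j+1} for some constants c^1,…,c^r with c^1 ≠ 0. -/
import Mathlib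


open Polynomial

private lemma aux_pow_mem (W : Submodule ℂ (Polynomial ℂ × Polynomial ℂ))
    (hinv : ∀ w ∈ W, (derivative w.1, derivative w.2) ∈ W) :
    ∀ e : ℕ, ((0 : Polynomial ℂ), (X : Polynomial ℂ) ^ e) ∈ W →
      ∀ d : ℕ, d ≤ e → ((0 : Polynomial ℂ), (X : Polynomial ℂ) ^ d) ∈ W := by
  intro e
  induction e with
  | zero =>
    intro h d hd
    interval_cases d
    exact h
  | succ e ih =>
    intro h d hd
    rcases Nat.lt_succ_iff_lt_or_eq.mp (Nat.lt_succ_of_le hd) with hlt | heq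
    · have h1 := hinv _ h
      simp only [derivative_zero, derivative_X_pow] at h1
      have he' : ((e + 1 : ℕ) : ℂ) ≠ 0 := Nat.cast_ne_zero.mpr (Nat.succ_ne_zero e)
      have h2 := W.smul_mem ((((e + 1 : ℕ) : ℂ))⁻¹) h1
      have h3 : ((0 : Polynomial ℂ), (X : Polynomial ℂ) ^ e) ∈ W := by
        convert h2 using 1
        refine Prod.ext (by simp) ?_
        show (X : Polynomial ℂ) ^ e = (((e + 1 : ℕ) : ℂ))⁻¹ • (C ((e + 1 : ℕ) : ℂ) * X ^ (e + 1 - 1))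
        rw [Polynomial.smul_eq_C_mul, ← mul_assoc, ← C_mul, inv_mul_cancel₀ he', C_1, one_mul]
        simp
      exact ih h3 d (Nat.lt_succ_iff.mp hlt)
    · rw [heq]; exact h

private lemma aux_top (W : Submodule ℂ (Polynomial ℂ × Polynomial ℂ))
    (hinv : ∀ w ∈ W, (derivative w.1, derivative w.2) ∈ W) :
    ∀ D : ℕ, ∀ Q : Polynomial ℂ, ((0 : Polynomial ℂ), Q) ∈ W → Q ≠ 0 → Q.natDegree = D →
      ((0 : Polynomial ℂ), (X : Polynomial ℂ) ^ D) ∈ W := by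
  intro D
  induction D using Nat.strong_induction_on with
  | _ D ih =>
    intro Q hQ hQ0 hdeg
    rcases Nat.eq_zero_or_pos D with h0 | hpos
    · subst h0
      obtain ⟨c, hc⟩ := Polynomial.natDegree_eq_zero.mp hdeg
      have hc0 : c ≠ 0 := by rintro rfl; rw [map_zero] at hc; exact hQ0 hc.symm
      have h2 := W.smul_mem c⁻¹ hQ
      have h3 : ((0 : Polynomial ℂ), (X : Polynomial ℂ) ^ 0) ∈ W := by
        convert h2 using 1
        refine Prod.ext (by simp) ?_
        show (X : Polynomial ℂ) ^ 0 = c⁻¹ • Q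
        rw [← hc, pow_zero, Polynomial.smul_C, smul_eq_mul, inv_mul_cancel₀ hc0, C_1]
      exact h3
    · have hcD : Q.coeff D ≠ 0 := by
        rw [← hdeg]; exact Polynomial.leadingCoeff_ne_zero.mpr hQ0
      have hco : (derivative Q).coeff (D - 1) ≠ 0 := by
        rw [coeff_derivative, show D - 1 + 1 = D by omega]
        refine mul_ne_zero hcD ?_
        have : ((D - 1 : ℕ) : ℂ) + 1 ≠ 0 := Nat.cast_add_one_ne_zero _
        exact_mod_cast this
      have hQ'0 : derivative Q ≠ 0 := fun h => hco (by simp [h])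
      have hd' : (derivative Q).natDegree = D - 1 := by
        refine le_antisymm ?_ (le_natDegree_of_ne_zero hco)
        have := Polynomial.natDegree_derivative_le Q
        omega
      have hQ'W : ((0 : Polynomial ℂ), derivative Q) ∈ W := by
        simpa using hinv _ hQ
      have hXd := ih (D - 1) (by omega) _ hQ'W hQ'0 hd'
      have hall := aux_pow_mem W hinv (D - 1) hXd
      have hsum : ((0 : Polynomial ℂ),
          ∑ e ∈ Finset.range D, C (Q.coeff e) * X ^ e) ∈ W := by
        have heq : ((0 : Polynomial ℂ), ∑ e ∈ Finset.range D, C (Q.coeff e) * X ^ e)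
            = ∑ e ∈ Finset.range D, ((0 : Polynomial ℂ), C (Q.coeff e) * X ^ e) := by
          refine Prod.ext (by simp [Prod.fst_sum]) (by simp [Prod.snd_sum])
        rw [heq]
        refine Submodule.sum_mem _ ?_
        intro e he
        have h4 := W.smul_mem (Q.coeff e) (hall e (by
          have := Finset.mem_range.mp he; omega))
        have h5 : (Q.coeff e • ((0 : Polynomial ℂ), (X : Polynomial ℂ) ^ e)
            : Polynomial ℂ × Polynomial ℂ)
            = ((0 : Polynomial ℂ), C (Q.coeff e) * X ^ e) := by
          refine Prod.ext (by simp) ?_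
          show Q.coeff e • (X : Polynomial ℂ) ^ e = C (Q.coeff e) * X ^ e
          rw [Polynomial.smul_eq_C_mul]
        rwa [h5] at h4
      have hR : ((0 : Polynomial ℂ),
          Q - ∑ e ∈ Finset.range D, C (Q.coeff e) * X ^ e) ∈ W := by
        have := W.sub_mem hQ hsum
        simpa using this
      have hRe : Q - ∑ e ∈ Finset.range D, C (Q.coeff e) * X ^ e
          = C (Q.coeff D) * X ^ D := by
        have h6 := Polynomial.as_sum_range' Q (D + 1) (by omega)
        rw [Finset.sum_range_succ] at h6
        simp only [← Polynomial.C_mul_X_pow_eq_monomial] at h6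
        nth_rewrite 1 [h6]
        ring
      rw [hRe] at hR
      have h7 := W.smul_mem (Q.coeff D)⁻¹ hR
      have h8 : ((Q.coeff D)⁻¹ • (((0 : Polynomial ℂ), C (Q.coeff D) * X ^ D))
          : Polynomial ℂ × Polynomial ℂ)
          = ((0 : Polynomial ℂ), (X : Polynomial ℂ) ^ D) := by
        refine Prod.ext (by simp) ?_
        show (Q.coeff D)⁻¹ • (C (Q.coeff D) * X ^ D) = (X : Polynomial ℂ) ^ D
        rw [Polynomial.smul_eq_C_mul, ← mul_assoc, ← C_mul, inv_mul_cancel₀ hcD, C_1, one_mul]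
      rwa [h8] at h7

private lemma aux_deg (n : ℕ) (W : Submodule ℂ (Polynomial ℂ × Polynomial ℂ))
    (hinv : ∀ w ∈ W, (derivative w.1, derivative w.2) ∈ W)
    (hv2 : ∀ j : ℕ, ((0 : Polynomial ℂ), (X : Polynomial ℂ) ^ j) ∈ W → j ≤ n)
    {Q : Polynomial ℂ} (hQ : ((0 : Polynomial ℂ), Q) ∈ W) (hQ0 : Q ≠ 0) :
    Q.natDegree ≤ n :=
  hv2 _ (aux_top W hinv Q.natDegree Q hQ hQ0 rfl)

private lemma aux_uniq (n : ℕ) (W : Submodule ℂ (Polynomial ℂ × Polynomial ℂ))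
    (hinv : ∀ w ∈ W, (derivative w.1, derivative w.2) ∈ W)
    (hv2 : ∀ j : ℕ, ((0 : Polynomial ℂ), (X : Polynomial ℂ) ^ j) ∈ W → j ≤ n)
    {P Q Q' : Polynomial ℂ} (h : (P, Q) ∈ W) (h' : (P, Q') ∈ W)
    {i : ℕ} (hi : n < i) : Q.coeff i = Q'.coeff i := by
  have hsub : ((0 : Polynomial ℂ), Q - Q') ∈ W := by
    have := W.sub_mem h h'
    simpa using this
  by_cases hqq : Q - Q' = 0
  · have : Q = Q' := sub_eq_zero.mp hqq
    rw [this]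
  · have hdeg := aux_deg n W hinv hv2 hsub hqq
    have : (Q - Q').coeff i = 0 :=
      Polynomial.coeff_eq_zero_of_natDegree_lt (by omega)
    rw [Polynomial.coeff_sub] at this
    exact sub_eq_zero.mp this

private lemma aux_dstep (W : Submodule ℂ (Polynomial ℂ × Polynomial ℂ))
    (hinv : ∀ w ∈ W, (derivative w.1, derivative w.2) ∈ W)
    {p : ℕ} (hp : 1 ≤ p) {Q : Polynomial ℂ} (h : ((X : Polynomial ℂ) ^ p, Q) ∈ W) :
    ((X : Polynomial ℂ) ^ (p - 1), ((p : ℂ))⁻¹ • derivative Q) ∈ W := by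
  have h1 := hinv _ h
  simp only [derivative_X_pow] at h1
  have hp0 : ((p : ℕ) : ℂ) ≠ 0 := Nat.cast_ne_zero.mpr (by omega)
  have h2 := W.smul_mem (((p : ℕ) : ℂ))⁻¹ h1
  have h3 : ((((p : ℕ) : ℂ))⁻¹ • ((C ((p : ℕ) : ℂ) * X ^ (p - 1), derivative Q))
      : Polynomial ℂ × Polynomial ℂ)
      = ((X : Polynomial ℂ) ^ (p - 1), ((p : ℂ))⁻¹ • derivative Q) := by
    refine Prod.ext ?_ rfl
    show ((p : ℂ))⁻¹ • (C ((p : ℕ) : ℂ) * X ^ (p - 1)) = (X : Polynomial ℂ) ^ (p - 1)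
    rw [Polynomial.smul_eq_C_mul, ← mul_assoc, ← C_mul, inv_mul_cancel₀ hp0, C_1, one_mul]
  rwa [h3] at h2

private lemma aux_coeff_sum (n : ℕ) (k : ℕ) (c : ℕ → ℂ) (j : ℕ) (hj1 : 1 ≤ j) (hjk : j ≤ k) :
    (∑ i ∈ Finset.Icc 1 k, c i • (X : Polynomial ℂ) ^ (n + i)).coeff (n + j) = c j := by
  rw [Polynomial.finset_sum_coeff]
  rw [Finset.sum_eq_single j]
  · rw [Polynomial.coeff_smul, Polynomial.coeff_X_pow, if_pos rfl, smul_eq_mul, mul_one]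
  · intro b hb hbj
    rw [Polynomial.coeff_smul, Polynomial.coeff_X_pow, if_neg (by omega), smul_zero]
  · intro hj
    exact absurd (Finset.mem_Icc.mpr ⟨hj1, hjk⟩) hj

/-- In a finite-dimensional `∂_z`-invariant subspace `W ⊆ ℂ[z] ⊗ V` containing a
mixed vector `z^{m+1}v₁ + Σ_j d_j z^{n+j}v₂` (`d₁ ≠ 0`) but containing `z^i v₁`
only for `i ≤ m` and `z^j v₂` only for `j ≤ n`, the coefficients of any mixed
vector `z^{m+k}v₁ + Σ_{j=1}^k c^k_j z^{n+j}v₂ ∈ W` obey the recursion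
`c^k_j = ((m+k)!(n+1)!)/((n+j)!(m+k−j+1)!)·c^{k−j+1}` for constants `c^1, …`
with `c^1 ≠ 0`. -/
theorem stmt10 (m n : ℕ) (W : Submodule ℂ (Polynomial ℂ × Polynomial ℂ))
    (hfd : FiniteDimensional ℂ W)
    (hinv : ∀ w ∈ W, (derivative w.1, derivative w.2) ∈ W)
    (hmix : ∃ s : ℕ, ∃ d : ℕ → ℂ, d 1 ≠ 0 ∧
      (((X : Polynomial ℂ) ^ (m + 1),
        ∑ j ∈ Finset.Icc 1 s, d j • (X : Polynomial ℂ) ^ (n + j)) ∈ W))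
    (hv1 : ∀ i : ℕ, ((X : Polynomial ℂ) ^ i, (0 : Polynomial ℂ)) ∈ W → i ≤ m)
    (hv2 : ∀ j : ℕ, ((0 : Polynomial ℂ), (X : Polynomial ℂ) ^ j) ∈ W → j ≤ n) :
    ∃ cseq : ℕ → ℂ, cseq 1 ≠ 0 ∧
      ∀ k : ℕ, 1 ≤ k → ∀ c' : ℕ → ℂ,
        (((X : Polynomial ℂ) ^ (m + k),
          ∑ j ∈ Finset.Icc 1 k, c' j • (X : Polynomial ℂ) ^ (n + j)) ∈ W) →
        ∀ j : ℕ, 1 ≤ j → j ≤ k →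
          c' j = ((Nat.factorial (m + k) : ℂ) * (Nat.factorial (n + 1) : ℂ)) /
              ((Nat.factorial (n + j) : ℂ) * (Nat.factorial (m + k - j + 1) : ℂ)) *
              cseq (k - j + 1) := by
  classical
  obtain ⟨s, d, hd1, hmem⟩ := hmix
  have hs : 1 ≤ s := by
    by_contra hs
    have hs0 : s = 0 := by omega
    subst hs0
    have h0 : (((X : Polynomial ℂ) ^ (m + 1), (0 : Polynomial ℂ)) ∈ W) := by
      simpa using hmem
    have := hv1 (m + 1) h0
    omega
  have hF : ∀ k : ℕ, (∃ Q : Polynomial ℂ, ((X : Polynomial ℂ) ^ (m + k), Q) ∈ W) ∨ True := fun _ => Or.inr trivial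
  set cseq : ℕ → ℂ := fun k =>
    if h : ∃ Q : Polynomial ℂ, ((X : Polynomial ℂ) ^ (m + k), Q) ∈ W
    then h.choose.coeff (n + 1) else 0 with hcseq
  have hcoe : ∀ k : ℕ, ∀ Q : Polynomial ℂ, ((X : Polynomial ℂ) ^ (m + k), Q) ∈ W →
      Q.coeff (n + 1) = cseq k := by
    intro k Q hQ
    have hE : ∃ Q : Polynomial ℂ, ((X : Polynomial ℂ) ^ (m + k), Q) ∈ W := ⟨Q, hQ⟩
    rw [hcseq]
    simp only [dif_pos hE]
    exact aux_uniq n W hinv hv2 hQ hE.choose_spec (Nat.lt_succ_self n)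
  have main : ∀ k : ℕ, 1 ≤ k → ∀ Q : Polynomial ℂ, ((X : Polynomial ℂ) ^ (m + k), Q) ∈ W →
      ∀ j : ℕ, 1 ≤ j → j ≤ k →
        Q.coeff (n + j) = ((Nat.factorial (m + k) : ℂ) * (Nat.factorial (n + 1) : ℂ)) /
            ((Nat.factorial (n + j) : ℂ) * (Nat.factorial (m + k - j + 1) : ℂ)) *
            cseq (k - j + 1) := by
    intro k
    induction k using Nat.strong_induction_on with
    | _ k ih =>
      intro hk Q hQ j hj1 hjk
      rcases eq_or_lt_of_le hj1 with hj | hj2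
      · -- j = 1
        rw [← hj]
        rw [hcoe k Q hQ]
        rw [show k - 1 + 1 = k by omega, show m + k - 1 + 1 = m + k by omega]
        have h1 : ((m + k).factorial : ℂ) * ((n + 1).factorial : ℂ) /
            (((n + 1).factorial : ℂ) * ((m + k).factorial : ℂ)) = 1 := by
          rw [mul_comm (((n + 1).factorial : ℂ))]
          exact div_self (mul_ne_zero (Nat.cast_ne_zero.mpr (Nat.factorial_ne_zero _))
            (Nat.cast_ne_zero.mpr (Nat.factorial_ne_zero _)))
        rw [h1, one_mul]
      · -- j ≥ 2
        have hk2 : 2 ≤ k := le_trans hj2 hjk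
        have hstep := aux_dstep W hinv (p := m + k) (by omega) hQ
        rw [show m + k - 1 = m + (k - 1) by omega] at hstep
        have hIH := ih (k - 1) (by omega) (by omega) _ hstep (j - 1) (by omega) (by omega)
        rw [Polynomial.coeff_smul, coeff_derivative, show n + (j - 1) + 1 = n + j by omega,
          smul_eq_mul] at hIH
        rw [show (k - 1) - (j - 1) + 1 = k - j + 1 by omega,
          show m + (k - 1) - (j - 1) + 1 = m + k - j + 1 by omega] at hIH
        have hnj : ((n + (j - 1) : ℕ) : ℂ) + 1 = ((n + j : ℕ) : ℂ) := by
          exact_mod_cast congrArg (fun t : ℕ => (t : ℂ)) (show n + (j - 1) + 1 = n + j by omega)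
        rw [hnj] at hIH
        have f1n : (m + k).factorial = (m + k) * (m + (k - 1)).factorial := by
          rw [show m + k = (m + (k - 1)) + 1 by omega, Nat.factorial_succ]
        have f2n : (n + j).factorial = (n + j) * (n + (j - 1)).factorial := by
          rw [show n + j = (n + (j - 1)) + 1 by omega, Nat.factorial_succ]
        have f1 : ((m + k).factorial : ℂ) = ((m + k : ℕ) : ℂ) * ((m + (k - 1)).factorial : ℂ) := by
          exact_mod_cast congrArg (fun t : ℕ => (t : ℂ)) f1n
        have f2 : ((n + j).factorial : ℂ) = ((n + j : ℕ) : ℂ) * ((n + (j - 1)).factorial : ℂ) := by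
          exact_mod_cast congrArg (fun t : ℕ => (t : ℂ)) f2n
        rw [f1, f2]
        have hmk : ((m + k : ℕ) : ℂ) ≠ 0 := Nat.cast_ne_zero.mpr (by omega)
        have hnj0 : ((n + j : ℕ) : ℂ) ≠ 0 := Nat.cast_ne_zero.mpr (by omega)
        have hg1 : (((m + (k - 1)).factorial : ℕ) : ℂ) ≠ 0 :=
          Nat.cast_ne_zero.mpr (Nat.factorial_ne_zero _)
        have hg2 : (((n + (j - 1)).factorial : ℕ) : ℂ) ≠ 0 :=
          Nat.cast_ne_zero.mpr (Nat.factorial_ne_zero _)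
        have hg3 : (((m + k - j + 1).factorial : ℕ) : ℂ) ≠ 0 :=
          Nat.cast_ne_zero.mpr (Nat.factorial_ne_zero _)
        have hg4 : (((n + 1).factorial : ℕ) : ℂ) ≠ 0 :=
          Nat.cast_ne_zero.mpr (Nat.factorial_ne_zero _)
        rw [inv_mul_eq_div, div_eq_iff hmk] at hIH
        set a : ℂ := ((m + k : ℕ) : ℂ) with ha
        set b : ℂ := ((n + j : ℕ) : ℂ) with hb
        set p : ℂ := ((m + (k - 1)).factorial : ℂ) with hp
        set q : ℂ := ((n + (j - 1)).factorial : ℂ) with hq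
        set r : ℂ := ((m + k - j + 1).factorial : ℂ) with hr
        set t : ℂ := ((n + 1).factorial : ℂ) with ht
        field_simp at hIH ⊢
        linear_combination hIH
  refine ⟨cseq, ?_, ?_⟩
  · have h1 := hcoe 1 _ hmem
    rw [aux_coeff_sum n s d 1 le_rfl hs] at h1
    rw [← h1]
    exact hd1
  · intro k hk c' hQ j hj1 hjk
    have h2 := main k hk _ hQ j hj1 hjk
    rw [aux_coeff_sum n k c' j hj1 hjk] at h2
    exact h2
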